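/- Let $(a,B)$ be an $n$-color vertex coloring model and suppose indices $i \neq j$ are twins (the $i$th and $j$th rows of $B$ are equal) with $a_i + a_j = 0$. Let $B'$ be obtained from $B$ by deleting rows and columns $i$ and $j$, and $a'$ from $a$ by deleting entries $i$ and $j$. Then $p_{a',B'}(H) = p_{a,B}(H)$ for every graph $H$. -/

import Mathlib

open Matrix BigOperators

/-- A finite graph, possibly with multiple edges and loops. -/
structure MultiGraph where
  V : Type
  E : Type
  [fV : Fintype V]
  [fE : Fintype E]
  [dV : DecidableEq V]
  [dE : DecidableEq E]
  ends : E → V × V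

attribute [instance] MultiGraph.fV MultiGraph.fE MultiGraph.dV MultiGraph.dE

/-- Partition function of a vertex coloring model `(a, B)` with color set `S`. -/
noncomputable def vertexPF {S : Type} [Fintype S] (a : S → ℂ)
    (B : Matrix S S ℂ) (G : MultiGraph) : ℂ :=
  ∑ φ : G.V → S, (∏ v, a (φ v)) * ∏ e, B (φ (G.ends e).1) (φ (G.ends e).2)

/-- Removing twins `i ≠ j` with `a i + a j = 0` (deleting both rows/columns and
both weights) does not change the partition function. -/
theorem vertexPF_remove_cancelling_twins {n : ℕ} (a : Fin n → ℂ) (ha : ∀ i, a i ≠ 0)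
    (B : Matrix (Fin n) (Fin n) ℂ) (hB : B.IsSymm)
    (i j : Fin n) (hij : i ≠ j) (htwin : ∀ m, B i m = B j m)
    (hsum : a i + a j = 0) (H : MultiGraph) :
    vertexPF
      (fun p : {m : Fin n // m ≠ i ∧ m ≠ j} => a (p : Fin n))
      (Matrix.of fun p q : {m : Fin n // m ≠ i ∧ m ≠ j} => B (p : Fin n) (q : Fin n)) H
      = vertexPF a B H := by
  classical
  letI : LinearOrder H.V := LinearOrder.lift' (Fintype.equivFin H.V) (Equiv.injective _)
  set σ : Equiv.Perm (Fin n) := Equiv.swap i j with hσ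
  have hBji : ∀ x y, B x y = B y x := fun x y => hB.apply y x
  have hrow : ∀ x y, B (σ x) y = B x y := by
    intro x y
    by_cases hx : x = i
    · subst hx; rw [hσ, Equiv.swap_apply_left]; exact (htwin y).symm
    by_cases hx' : x = j
    · subst hx'; rw [hσ, Equiv.swap_apply_right]; exact htwin y
    · rw [hσ, Equiv.swap_apply_of_ne_of_ne hx hx']
  have hcol : ∀ x y, B x (σ y) = B x y := fun x y => by
    rw [hBji x (σ y), hrow, hBji]
  have hedge : ∀ (φ : H.V → Fin n) (v0 : H.V),
      ∀ e, B ((fun v => if v = v0 then σ (φ v) else φ v) (H.ends e).1)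
            ((fun v => if v = v0 then σ (φ v) else φ v) (H.ends e).2)
          = B (φ (H.ends e).1) (φ (H.ends e).2) := by
    intro φ v0 e
    dsimp only
    by_cases h1 : (H.ends e).1 = v0 <;> by_cases h2 : (H.ends e).2 = v0 <;>
      simp [h1, h2, hrow, hcol]
  set f : (H.V → Fin n) → ℂ :=
    fun φ => (∏ v, a (φ v)) * ∏ e, B (φ (H.ends e).1) (φ (H.ends e).2) with hf
  have key : ∑ φ ∈ Finset.univ.filter
      (fun φ : H.V → Fin n => ¬ ∀ v, φ v ≠ i ∧ φ v ≠ j), f φ = 0 := by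
    set T : (H.V → Fin n) → Finset H.V :=
      fun φ => Finset.univ.filter (fun v => φ v = i ∨ φ v = j) with hT
    have hTne : ∀ φ ∈ Finset.univ.filter
        (fun φ : H.V → Fin n => ¬ ∀ v, φ v ≠ i ∧ φ v ≠ j), (T φ).Nonempty := by
      intro φ hφ
      simp only [Finset.mem_filter, Finset.mem_univ, true_and] at hφ
      push_neg at hφ
      obtain ⟨v, hv⟩ := hφ
      refine ⟨v, ?_⟩
      simp only [hT, Finset.mem_filter, Finset.mem_univ, true_and]
      by_cases h : φ v = i
      · exact Or.inl h
      · exact Or.inr (hv h)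
    set g : ∀ φ ∈ Finset.univ.filter
        (fun φ : H.V → Fin n => ¬ ∀ v, φ v ≠ i ∧ φ v ≠ j), (H.V → Fin n) :=
      fun φ hφ => fun v => if v = (T φ).min' (hTne φ hφ) then σ (φ v) else φ v with hg
    have hv0mem : ∀ φ hφ, (T φ).min' (hTne φ hφ) ∈ T φ := fun φ hφ => Finset.min'_mem _ _
    have hmemv0 : ∀ (φ : H.V → Fin n) (hφ : φ ∈ Finset.univ.filter
        (fun φ : H.V → Fin n => ¬ ∀ v, φ v ≠ i ∧ φ v ≠ j)),
        φ ((T φ).min' (hTne φ hφ)) = i ∨ φ ((T φ).min' (hTne φ hφ)) = j := by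
      intro φ hφ
      have h := hv0mem φ hφ
      simp only [hT, Finset.mem_filter, Finset.mem_univ, true_and] at h
      exact h
    have hTg : ∀ φ hφ, T (g φ hφ) = T φ := by
      intro φ hφ
      ext v
      simp only [hT, Finset.mem_filter, Finset.mem_univ, true_and, hg]
      by_cases hv : v = (T φ).min' (hTne φ hφ)
      · subst hv
        rw [if_pos rfl]
        rcases hmemv0 φ hφ with h | h <;> rw [h] <;>
          simp [hσ, Equiv.swap_apply_left, Equiv.swap_apply_right, h]
      · simp only [hT] at hv; simp [hv]
    have g_mem : ∀ φ hφ, g φ hφ ∈ Finset.univ.filter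
        (fun φ : H.V → Fin n => ¬ ∀ v, φ v ≠ i ∧ φ v ≠ j) := by
      intro φ hφ
      simp only [Finset.mem_filter, Finset.mem_univ, true_and]
      push_neg
      refine ⟨(T φ).min' (hTne φ hφ), ?_⟩
      intro hgi
      simp only [hg, if_pos rfl] at hgi ⊢
      rcases hmemv0 φ hφ with h | h
      · rw [h, hσ, Equiv.swap_apply_left]
      · rw [h, hσ, Equiv.swap_apply_right] at hgi
        exact absurd rfl hgi
    refine Finset.sum_involution g ?_ ?_ g_mem ?_
    · intro φ hφ
      have haneg : a (g φ hφ ((T φ).min' (hTne φ hφ))) = - a (φ ((T φ).min' (hTne φ hφ))) := by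
        simp only [hg, if_pos rfl]
        rcases hmemv0 φ hφ with h | h
        · rw [h, hσ, Equiv.swap_apply_left]; linear_combination hsum
        · rw [h, hσ, Equiv.swap_apply_right]; linear_combination hsum
      have hprodA : ∏ v, a (g φ hφ v) = - ∏ v, a (φ v) := by
        rw [← Finset.mul_prod_erase Finset.univ _ (Finset.mem_univ ((T φ).min' (hTne φ hφ))),
            ← Finset.mul_prod_erase Finset.univ (fun v => a (φ v))
              (Finset.mem_univ ((T φ).min' (hTne φ hφ)))]
        have : ∏ v ∈ Finset.univ.erase ((T φ).min' (hTne φ hφ)), a (g φ hφ v)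
            = ∏ v ∈ Finset.univ.erase ((T φ).min' (hTne φ hφ)), a (φ v) := by
          refine Finset.prod_congr rfl fun v hv => ?_
          simp only [hg, if_neg (Finset.ne_of_mem_erase hv)]
        rw [this, haneg]; ring
      have hprodB : ∏ e, B (g φ hφ (H.ends e).1) (g φ hφ (H.ends e).2)
          = ∏ e, B (φ (H.ends e).1) (φ (H.ends e).2) :=
        Finset.prod_congr rfl fun e _ => hedge φ ((T φ).min' (hTne φ hφ)) e
      simp only [hf, hprodA, hprodB]; ring
    · intro φ hφ _
      intro hcontra
      have hthis := congrFun hcontra ((T φ).min' (hTne φ hφ))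
      simp only [hg, if_pos rfl] at hthis
      rcases hmemv0 φ hφ with h | h
      · rw [h, hσ, Equiv.swap_apply_left] at hthis; exact hij.symm (h ▸ hthis)
      · rw [h, hσ, Equiv.swap_apply_right] at hthis; exact hij (h ▸ hthis)
    · intro φ hφ
      funext v
      have hmin : (T (g φ hφ)).min' (hTne _ (g_mem φ hφ)) = (T φ).min' (hTne φ hφ) := by
        simp only [hTg φ hφ]
      simp only [hg] at hmin ⊢; simp only [hmin]
      by_cases hv : v = (T φ).min' (hTne φ hφ)
      · simp [hv, hσ]
      · simp [hv]
  have hsplit : vertexPF a B H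
      = ∑ φ ∈ Finset.univ.filter (fun φ : H.V → Fin n => ∀ v, φ v ≠ i ∧ φ v ≠ j), f φ := by
    rw [vertexPF, ← Finset.sum_filter_add_sum_filter_not Finset.univ
      (fun φ : H.V → Fin n => ∀ v, φ v ≠ i ∧ φ v ≠ j), key, add_zero]
  rw [hsplit, vertexPF]
  refine Finset.sum_bij' (fun φ _ => fun v => (φ v : Fin n))
    (fun ψ hψ => fun v => ⟨ψ v, by
      simp only [Finset.mem_filter, Finset.mem_univ, true_and] at hψ; exact hψ v⟩)
    ?_ ?_ ?_ ?_ ?_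
  · intro φ _
    simp only [Finset.mem_filter, Finset.mem_univ, true_and]
    exact fun v => (φ v).2
  · intro ψ hψ; exact Finset.mem_univ _
  · intro φ _; funext v; rfl
  · intro ψ hψ; funext v; rfl
  · intro φ _; rfl
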